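/- Let λ1, λ2, β, θ, m, d_T, d_I, d_V, d_E, d_c be positive real numbers and set R0 = m·β·λ1·λ2/(d_V·d_E·d_T). Let J0 be the real 5×5 matrix with rows (−d_T, 0, −β·λ1·λ2/(d_T·d_E), 0, 0), (0, −d_I, β·λ1·λ2/(d_T·d_E), 0, 0), (0, m·d_I, −d_V, 0, 0), (0, 0, −β·λ1·λ2·θ/(d_T·d_E), −d_E, 0), (0, 0, 0, 0, −d_c). Then every complex eigenvalue of J0 has negative real part if and only if R0 < 1. -/

import Mathlib

open Polynomial

lemma eval_charpoly' {n : Type*} [Fintype n] [DecidableEq n] {R : Type*} [CommRing R]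
    (M : Matrix n n R) (z : R) :
    (M.charpoly).eval z = (Matrix.of (fun i j => (if i = j then z else 0) - M i j)).det := by
  rw [Matrix.charpoly, ← Polynomial.coe_evalRingHom, RingHom.map_det]
  congr 1
  ext i j
  by_cases h : i = j <;>
    simp [Matrix.charmatrix_apply, Matrix.diagonal_apply, h, RingHom.mapMatrix_apply,
      Matrix.map_apply]

lemma quad_root_re_neg (b c : ℝ) (hb : 0 < b) (hc : 0 < c) (z : ℂ)
    (hz : z^2 + (b:ℂ)*z + (c:ℂ) = 0) : z.re < 0 := by
  have h1 := congrArg Complex.re hz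
  have h2 := congrArg Complex.im hz
  simp [pow_two, Complex.mul_re, Complex.mul_im] at h1 h2
  set x := z.re; set y := z.im
  have h2' : y * (2*x + b) = 0 := by linarith [h2]
  rcases mul_eq_zero.1 h2' with hy | hxb
  · by_contra h
    push_neg at h
    nlinarith [h1, hy]
  · linarith

set_option maxHeartbeats 2000000 in
theorem stmt0 (lam1 lam2 beta theta m dT dI dV dE dc : ℝ)
    (hlam1 : 0 < lam1) (hlam2 : 0 < lam2) (hbeta : 0 < beta) (htheta : 0 < theta)
    (hm : 0 < m) (hdT : 0 < dT) (hdI : 0 < dI) (hdV : 0 < dV) (hdE : 0 < dE)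
    (hdc : 0 < dc)
    (R0 : ℝ) (hR0 : R0 = m * beta * lam1 * lam2 / (dV * dE * dT))
    (J0 : Matrix (Fin 5) (Fin 5) ℝ)
    (hJ0 : J0 = !![-dT, 0, -beta*lam1*lam2/(dT*dE), 0, 0;
                   0, -dI, beta*lam1*lam2/(dT*dE), 0, 0;
                   0, m*dI, -dV, 0, 0;
                   0, 0, -beta*lam1*lam2*theta/(dT*dE), -dE, 0;
                   0, 0, 0, 0, -dc]) :
    (∀ z : ℂ, (J0.charpoly.map (algebraMap ℝ ℂ)).IsRoot z → z.re < 0) ↔ R0 < 1 := by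
  subst hJ0 hR0
  have key : ∀ z : ℂ, ((Matrix.charpoly (!![-dT, 0, -beta*lam1*lam2/(dT*dE), 0, 0;
                   0, -dI, beta*lam1*lam2/(dT*dE), 0, 0;
                   0, m*dI, -dV, 0, 0;
                   0, 0, -beta*lam1*lam2*theta/(dT*dE), -dE, 0;
                   0, 0, 0, 0, -dc] : Matrix (Fin 5) (Fin 5) ℝ)).map (algebraMap ℝ ℂ)).IsRoot z ↔
      (z + (dT:ℂ)) * (z + (dE:ℂ)) * (z + (dc:ℂ)) *
        ((z + (dI:ℂ)) * (z + (dV:ℂ)) - ((m*dI*(beta*lam1*lam2/(dT*dE)) : ℝ) : ℂ)) = 0 := by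
    intro z
    rw [← Matrix.charpoly_map, Polynomial.IsRoot, eval_charpoly']
    have hmat : (Matrix.of (fun i j => (if i = j then z else 0) -
        ((!![-dT, 0, -beta*lam1*lam2/(dT*dE), 0, 0;
                   0, -dI, beta*lam1*lam2/(dT*dE), 0, 0;
                   0, m*dI, -dV, 0, 0;
                   0, 0, -beta*lam1*lam2*theta/(dT*dE), -dE, 0;
                   0, 0, 0, 0, -dc] : Matrix (Fin 5) (Fin 5) ℝ).map (algebraMap ℝ ℂ)) i j)) =
        !![z + (dT:ℂ), 0, ((beta*lam1*lam2/(dT*dE) : ℝ) : ℂ), 0, 0;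
           0, z + (dI:ℂ), -((beta*lam1*lam2/(dT*dE) : ℝ) : ℂ), 0, 0;
           0, -((m*dI : ℝ) : ℂ), z + (dV:ℂ), 0, 0;
           0, 0, ((beta*lam1*lam2*theta/(dT*dE) : ℝ) : ℂ), z + (dE:ℂ), 0;
           0, 0, 0, 0, z + (dc:ℂ)] := by
      ext i j
      fin_cases i <;> fin_cases j <;>
        simp [Matrix.map_apply, Matrix.vecHead, Matrix.vecTail] <;> push_cast <;> ring
    rw [hmat]
    have hd : (!![z + (dT:ℂ), 0, ((beta*lam1*lam2/(dT*dE) : ℝ) : ℂ), 0, 0;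
           0, z + (dI:ℂ), -((beta*lam1*lam2/(dT*dE) : ℝ) : ℂ), 0, 0;
           0, -((m*dI : ℝ) : ℂ), z + (dV:ℂ), 0, 0;
           0, 0, ((beta*lam1*lam2*theta/(dT*dE) : ℝ) : ℂ), z + (dE:ℂ), 0;
           0, 0, 0, 0, z + (dc:ℂ)] : Matrix (Fin 5) (Fin 5) ℂ).det =
        (z + (dT:ℂ)) * (z + (dE:ℂ)) * (z + (dc:ℂ)) *
        ((z + (dI:ℂ)) * (z + (dV:ℂ)) - ((m*dI*(beta*lam1*lam2/(dT*dE)) : ℝ) : ℂ)) := by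
      simp [Matrix.det_succ_row_zero, Fin.sum_univ_succ, Fin.succAbove]
      push_cast
      ring
    rw [hd]
  constructor
  · intro H
    by_contra hge
    push_neg at hge
    have h1 : dV * dE * dT ≤ m * beta * lam1 * lam2 := (one_le_div (by positivity)).1 hge
    have hc0 : dI * dV - m*dI*(beta*lam1*lam2/(dT*dE)) ≤ 0 := by
      have h2 : dI*dV*(dT*dE) ≤ dI*(m*beta*lam1*lam2) := by
        nlinarith [mul_le_mul_of_nonneg_left h1 hdI.le]
      have h3 : m*dI*(beta*lam1*lam2/(dT*dE)) = dI*(m*beta*lam1*lam2)/(dT*dE) := by ring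
      rw [h3, sub_nonpos, le_div_iff₀ (by positivity)]
      linarith
    obtain ⟨D, hD⟩ : ∃ D : ℝ, D = (dI+dV)^2 - 4*(dI*dV - m*dI*(beta*lam1*lam2/(dT*dE))) :=
      ⟨_, rfl⟩
    have hDnn : 0 ≤ D := by rw [hD]; nlinarith [hc0, sq_nonneg (dI+dV)]
    obtain ⟨x, hx⟩ : ∃ x : ℝ, x = (-(dI+dV) + Real.sqrt D)/2 := ⟨_, rfl⟩
    have hs : Real.sqrt D ^ 2 = D := Real.sq_sqrt hDnn
    have hroot : x^2 + (dI+dV)*x + (dI*dV - m*dI*(beta*lam1*lam2/(dT*dE))) = 0 := by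
      rw [hx]
      linear_combination hs/4 + hD/4
    have hxnn : 0 ≤ x := by
      have h4 : Real.sqrt ((dI+dV)^2) ≤ Real.sqrt D := by
        apply Real.sqrt_le_sqrt
        rw [hD]; nlinarith [hc0]
      rw [Real.sqrt_sq (by linarith : (0:ℝ) ≤ dI+dV)] at h4
      rw [hx]; linarith
    have hfac : ((x:ℂ) + (dI:ℂ)) * ((x:ℂ) + (dV:ℂ)) -
        ((m*dI*(beta*lam1*lam2/(dT*dE)) : ℝ) : ℂ) = 0 := by
      have hre : (x + dI) * (x + dV) - (m*dI*(beta*lam1*lam2/(dT*dE))) = 0 := by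
        linear_combination hroot
      exact_mod_cast congrArg (fun t : ℝ => (t:ℂ)) hre
    have := H (x:ℂ) ((key (x:ℂ)).mpr (by rw [hfac, mul_zero]))
    rw [Complex.ofReal_re] at this
    linarith
  · intro hR z hz
    rw [key] at hz
    have h1 : m * beta * lam1 * lam2 < dV * dE * dT := (div_lt_one (by positivity)).1 hR
    have hc : 0 < dI * dV - m*dI*(beta*lam1*lam2/(dT*dE)) := by
      have h2 : dI*(m*beta*lam1*lam2) < dI*dV*(dT*dE) := by
        nlinarith [mul_lt_mul_of_pos_left h1 hdI]
      have h3 : m*dI*(beta*lam1*lam2/(dT*dE)) = dI*(m*beta*lam1*lam2)/(dT*dE) := by ring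
      rw [sub_pos, h3, div_lt_iff₀ (by positivity)]
      linarith
    rcases mul_eq_zero.1 hz with h | h
    · rcases mul_eq_zero.1 h with h' | h'
      · rcases mul_eq_zero.1 h' with h'' | h''
        · have : z.re = -dT := by
            have := congrArg Complex.re h''
            simp at this
            linarith
          rw [this]; linarith
        · have : z.re = -dE := by
            have := congrArg Complex.re h''
            simp at this
            linarith
          rw [this]; linarith
      · have : z.re = -dc := by
          have := congrArg Complex.re h'
          simp at this
          linarith
        rw [this]; linarith
    · apply quad_root_re_neg (dI+dV) (dI*dV - m*dI*(beta*lam1*lam2/(dT*dE))) (by linarith) hc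
      push_cast
      push_cast at h
      linear_combination h
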